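/- Let F be a standard Borel space. Then the graph of the sequential extension function, the set {(S, x, T) ∈ Finset F × F × Finset F : T = insert x S}, is measurable in the product σ-algebra of 𝔻, the Borel σ-algebra of F, and 𝔻; equivalently, its indicator function ξ(S, x, T) (equal to 1 if insert x S = T and 0 otherwise) is a measurable real-valued function. -/

import Mathlib

open MeasureTheory
open scoped ENNReal Classical

/-- The canonical embedding of a database instance (a finite set of facts)
into the space of measures: `S ↦ ∑_{x ∈ S} δ_x`. -/
noncomputable def iota {F : Type*} [MeasurableSpace F] (S : Finset F) : Measure F :=
  ∑ x ∈ S, Measure.dirac x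

/-- The instance space `𝔻`: `Finset F` equipped with the σ-algebra comapped along `ι`
from the canonical σ-algebra on `Measure F`. -/
noncomputable instance instanceSpace (F : Type*) [MeasurableSpace F] : MeasurableSpace (Finset F) :=
  MeasurableSpace.comap iota inferInstance

section Aux

variable {F : Type*} [MeasurableSpace F]

lemma measurable_iota : Measurable (iota : Finset F → Measure F) :=
  Measurable.of_comap_le le_rfl

lemma iota_apply [MeasurableSingletonClass F] (S : Finset F) (A : Set F) :
    iota S A = ∑ y ∈ S, A.indicator 1 y := by
  rw [iota, Measure.finset_sum_apply]
  exact Finset.sum_congr rfl fun y _ => Measure.dirac_apply y A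

lemma iota_apply_card [MeasurableSingletonClass F] [DecidableEq F] (S : Finset F) (A : Set F)
    [DecidablePred (· ∈ A)] :
    iota S A = (S.filter (· ∈ A)).card := by
  rw [iota_apply, Finset.card_filter]
  push_cast
  exact Finset.sum_congr rfl fun y _ => by by_cases h : y ∈ A <;> simp [h]

instance [MeasurableSingletonClass F] (S : Finset F) : IsFiniteMeasure (iota S) := by
  constructor
  rw [iota_apply]
  simp only [Set.indicator_univ, Pi.one_apply, Finset.sum_const, nsmul_eq_mul, mul_one]
  exact ENNReal.natCast_lt_top _

lemma iota_singleton [MeasurableSingletonClass F] [DecidableEq F] (S : Finset F) (x : F) :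
    iota S {x} = if x ∈ S then 1 else 0 := by
  rw [iota_apply]
  simp [Set.indicator_apply, Finset.sum_ite_eq']

lemma iota_injective [MeasurableSingletonClass F] [DecidableEq F] :
    Function.Injective (iota : Finset F → Measure F) := by
  intro S T h
  ext x
  have hx := congrArg (fun μ : Measure F => μ {x}) h
  simp only [iota_singleton] at hx
  by_cases hS : x ∈ S <;> by_cases hT : x ∈ T <;> simp_all

lemma measurable_memFn [MeasurableSingletonClass F] [DecidableEq F]
    {e : F → ℝ} (he : MeasurableEmbedding e) :
    Measurable (fun p : Finset F × F => (iota p.1 {p.2} : ℝ≥0∞)) := by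
  have key : ∀ p : Finset F × F,
      iota p.1 {p.2} =
      ⨅ q : ℚ × ℚ, if (q.1 : ℝ) < e p.2 ∧ e p.2 < (q.2 : ℝ)
        then iota p.1 (e ⁻¹' Set.Ioo (q.1 : ℝ) (q.2 : ℝ)) else ⊤ := by
    rintro ⟨S, x⟩
    refine le_antisymm (le_iInf fun q => ?_) ?_
    · by_cases hq : (q.1 : ℝ) < e x ∧ e x < (q.2 : ℝ)
      · rw [if_pos hq]
        refine measure_mono ?_
        rintro y rfl
        exact ⟨hq.1, hq.2⟩
      · rw [if_neg hq]; exact le_top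
    · obtain ⟨δ, hδ, hδ'⟩ : ∃ δ : ℝ, 0 < δ ∧ ∀ y ∈ S, e y ≠ e x → δ ≤ |e y - e x| := by
        rcases (S.filter (fun y => e y ≠ e x)).eq_empty_or_nonempty with h | h
        · exact ⟨1, one_pos, fun y hy hne =>
            absurd (Finset.filter_eq_empty_iff.mp h hy) (by simp [hne])⟩
        · refine ⟨((S.filter (fun y => e y ≠ e x)).image fun y => |e y - e x|).min'
            (h.image (fun y => |e y - e x|)), ?_, fun y hy hne => ?_⟩
          · obtain ⟨y, hy, hy'⟩ := Finset.mem_image.mp (Finset.min'_mem _ (h.image (fun y => |e y - e x|)))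
            rw [← hy']
            exact abs_pos.mpr (sub_ne_zero.mpr (Finset.mem_filter.mp hy).2)
          · exact Finset.min'_le _ _ (Finset.mem_image.mpr
              ⟨y, Finset.mem_filter.mpr ⟨hy, hne⟩, rfl⟩)
      obtain ⟨a, ha1, ha2⟩ := exists_rat_btwn (show e x - δ < e x by linarith)
      obtain ⟨b, hb1, hb2⟩ := exists_rat_btwn (show e x < e x + δ by linarith)
      refine le_trans (iInf_le _ (a, b)) ?_
      rw [if_pos ⟨ha2, hb1⟩]
      rw [iota_apply, iota_apply]
      refine Finset.sum_le_sum fun y hy => ?_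
      by_cases hmem : y ∈ e ⁻¹' Set.Ioo (a : ℝ) (b : ℝ)
      · have hexy : e y = e x := by
          by_contra hne
          have hle := hδ' y hy hne
          have h1 : (a : ℝ) < e y := hmem.1
          have h2 : e y < (b : ℝ) := hmem.2
          have : |e y - e x| < δ := abs_sub_lt_iff.mpr ⟨by linarith, by linarith⟩
          linarith
        have : y = x := he.injective hexy
        subst this
        simp [Set.indicator_apply, hmem]
      · simp [Set.indicator_apply, hmem]
  rw [funext key]
  refine Measurable.iInf fun q => Measurable.ite ?_ ?_ measurable_const
  · exact (he.measurable.comp measurable_snd) measurableSet_Ioo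
  · exact ((Measure.measurable_coe (he.measurable measurableSet_Ioo)).comp
      measurable_iota).comp measurable_fst

lemma measurableSet_memSet [MeasurableSingletonClass F] [DecidableEq F]
    {e : F → ℝ} (he : MeasurableEmbedding e) :
    MeasurableSet {p : Finset F × F | p.2 ∈ p.1} := by
  have h : {p : Finset F × F | p.2 ∈ p.1}
      = (fun p : Finset F × F => iota p.1 {p.2}) ⁻¹' {1} := by
    ext p
    by_cases hp : p.2 ∈ p.1 <;> simp [iota_singleton, hp]
  rw [h]
  exact measurable_memFn he (measurableSet_singleton 1)

end Aux

noncomputable def chi {F : Type*} (A : Set F) (S : Finset F) (x : F) : ENNReal :=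
  (A ∩ ↑S).indicator 1 x

lemma chi_eq_one {F : Type*} {A : Set F} {S : Finset F} {x : F} (hA : x ∈ A) (hS : x ∈ S) :
    chi A S x = 1 := by
  simp [chi, Set.indicator_apply, hA, hS]

lemma chi_eq_zero {F : Type*} {A : Set F} {S : Finset F} {x : F} (h : ¬(x ∈ A ∧ x ∈ S)) :
    chi A S x = 0 := by
  simp only [chi, Set.indicator_apply, Set.mem_inter_iff, Finset.mem_coe]
  rw [if_neg h]

section Aux2

variable {F : Type*} [MeasurableSpace F] [MeasurableSingletonClass F] [DecidableEq F]

lemma iota_insert_eval {A : Set F} (hA : MeasurableSet A) (S : Finset F) (x : F) :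
    iota (insert x S) A =
      A.indicator 1 x + (iota S A - chi A S x) := by
  rw [iota_apply, iota_apply]
  by_cases hxS : x ∈ S
  · rw [Finset.insert_eq_self.mpr hxS]
    by_cases hxA : x ∈ A
    · rw [chi_eq_one hxA hxS, Set.indicator_of_mem hxA, Pi.one_apply]
      have h1 : (1 : ℝ≥0∞) ≤ ∑ y ∈ S, A.indicator 1 y := by
        refine le_trans ?_ (Finset.single_le_sum
          (f := fun y => A.indicator (1 : F → ℝ≥0∞) y) (fun _ _ => zero_le) hxS)
        simp [Set.indicator_of_mem hxA]
      exact (add_tsub_cancel_of_le h1).symm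
    · rw [chi_eq_zero (fun h => hxA h.1), tsub_zero, Set.indicator_of_notMem hxA, zero_add]
  · rw [Finset.sum_insert hxS, chi_eq_zero (fun h => hxS h.2), tsub_zero]

lemma measurable_phi {e : F → ℝ} (he : MeasurableEmbedding e)
    {A : Set F} (hA : MeasurableSet A) :
    Measurable (fun p : Finset F × F =>
      A.indicator 1 p.2 + (iota p.1 A - chi A p.1 p.2)) := by
  refine Measurable.add ?_ (Measurable.sub ?_ ?_)
  · exact (measurable_one.indicator hA).comp measurable_snd
  · exact ((Measure.measurable_coe hA).comp measurable_iota).comp measurable_fst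
  · have heq : (fun p : Finset F × F => chi A p.1 p.2) =
        Set.indicator {p : Finset F × F | p.2 ∈ A ∧ p.2 ∈ p.1} 1 := by
      ext p
      by_cases hp : p.2 ∈ A ∧ p.2 ∈ p.1
      · rw [chi_eq_one hp.1 hp.2]
        exact (Set.indicator_of_mem (show p ∈ {p : Finset F × F | p.2 ∈ A ∧ p.2 ∈ p.1} from hp) (1 : Finset F × F → ℝ≥0∞)).symm
      · rw [chi_eq_zero hp]
        exact (Set.indicator_of_notMem (show p ∉ {p : Finset F × F | p.2 ∈ A ∧ p.2 ∈ p.1} from hp) (1 : Finset F × F → ℝ≥0∞)).symm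
    rw [heq]
    exact measurable_one.indicator ((measurable_snd hA).inter (measurableSet_memSet he))

lemma measurableSet_E {e : F → ℝ} (he : MeasurableEmbedding e)
    {A : Set F} (hA : MeasurableSet A) :
    MeasurableSet {q : (Finset F × F) × Finset F |
      iota q.2 A = A.indicator 1 q.1.2 +
        (iota q.1.1 A - chi A q.1.1 q.1.2)} := by
  have hf : Measurable fun q : (Finset F × F) × Finset F => iota q.2 A :=
    ((Measure.measurable_coe hA).comp measurable_iota).comp measurable_snd
  have hg : Measurable fun q : (Finset F × F) × Finset F =>
      A.indicator 1 q.1.2 + (iota q.1.1 A - chi A q.1.1 q.1.2) :=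
    (measurable_phi he hA).comp measurable_fst
  have h := (measurableSet_le hf hg).inter (measurableSet_le hg hf)
  convert h using 1
  exact Set.ext fun q => le_antisymm_iff

end Aux2

/-- The graph of the sequential extension function,
`{((S, x), T) : T = insert x S}`, is measurable in the product σ-algebra of
`𝔻`, the Borel σ-algebra of `F`, and `𝔻`; equivalently, its indicator function
`ξ(S, x, T)` is a measurable real-valued function. -/
theorem measurableSet_graph_ext (F : Type*) [MeasurableSpace F] [StandardBorelSpace F]
    [DecidableEq F] :
    MeasurableSet {q : (Finset F × F) × Finset F | q.2 = insert q.1.2 q.1.1} ∧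
    Measurable (Set.indicator
      {q : (Finset F × F) × Finset F | insert q.1.2 q.1.1 = q.2}
      (fun _ => (1 : ℝ))) := by
  have key : MeasurableSet {q : (Finset F × F) × Finset F | q.2 = insert q.1.2 q.1.1} := by
    obtain ⟨e, he⟩ := exists_measurableEmbedding_real F
    set I : Set (Set ℝ) := ⋃ (a : ℚ) (b : ℚ) (_ : a < b), {Set.Ioo (a : ℝ) (b : ℝ)} with hI
    set C : Set (Set F) := Set.preimage e '' I with hC
    have hgen : (inferInstance : MeasurableSpace F) = MeasurableSpace.generateFrom C := by
      calc (inferInstance : MeasurableSpace F)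
          = MeasurableSpace.comap e inferInstance := he.comap_eq.symm
        _ = MeasurableSpace.comap e (.generateFrom I) := by
            rw [BorelSpace.measurable_eq (α := ℝ), Real.borel_eq_generateFrom_Ioo_rat]
        _ = .generateFrom C := MeasurableSpace.comap_generateFrom
    have hpi : IsPiSystem C := Real.isPiSystem_Ioo_rat.comap e
    have hEq : {q : (Finset F × F) × Finset F | q.2 = insert q.1.2 q.1.1} =
        (⋂ (a : ℚ) (b : ℚ) (_ : a < b), {q : (Finset F × F) × Finset F |
          iota q.2 (e ⁻¹' Set.Ioo (a : ℝ) (b : ℝ)) =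
            (e ⁻¹' Set.Ioo (a : ℝ) (b : ℝ)).indicator 1 q.1.2 +
              (iota q.1.1 (e ⁻¹' Set.Ioo (a : ℝ) (b : ℝ)) -
                chi (e ⁻¹' Set.Ioo (a : ℝ) (b : ℝ)) q.1.1 q.1.2)}) ∩
        {q : (Finset F × F) × Finset F |
          iota q.2 Set.univ = (Set.univ : Set F).indicator 1 q.1.2 +
            (iota q.1.1 Set.univ -
              chi (Set.univ : Set F) q.1.1 q.1.2)} := by
      ext ⟨⟨S, x⟩, T⟩
      simp only [Set.mem_setOf_eq, Set.mem_inter_iff, Set.mem_iInter]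
      constructor
      · rintro rfl
        exact ⟨fun a b hab => iota_insert_eval (he.measurable measurableSet_Ioo) S x,
          iota_insert_eval MeasurableSet.univ S x⟩
      · rintro ⟨h1, h2⟩
        have hm : iota T = iota (insert x S) := by
          refine ext_of_generate_finite C hgen hpi ?_ ?_
          · rintro A ⟨B, hB, rfl⟩
            simp only [hI, Set.mem_iUnion, Set.mem_singleton_iff] at hB
            obtain ⟨a, b, hab, rfl⟩ := hB
            rw [h1 a b hab, iota_insert_eval (he.measurable measurableSet_Ioo) S x]
          · rw [h2, iota_insert_eval MeasurableSet.univ S x]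
        exact iota_injective hm
    rw [hEq]
    exact MeasurableSet.inter
      (MeasurableSet.iInter fun a => MeasurableSet.iInter fun b =>
        MeasurableSet.iInter fun hab => measurableSet_E he (he.measurable measurableSet_Ioo))
      (measurableSet_E he MeasurableSet.univ)
  refine ⟨key, ?_⟩
  have hsets : {q : (Finset F × F) × Finset F | insert q.1.2 q.1.1 = q.2} =
      {q : (Finset F × F) × Finset F | q.2 = insert q.1.2 q.1.1} := by
    ext q; exact eq_comm
  rw [hsets]
  exact measurable_const.indicator key
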